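/- Suppose a choice process admits an AAT representation (u, Γ), and after history h the DM would choose x from A and y from B, where x ≠ y and {x,y} ⊆ A ∩ B. Then either the choice after history (h, A) from B and the choice after history (h, B) from A both equal x (in which case u(x) > u(y)), or both equal y (in which case u(y) > u(x)). -/

import Mathlib

open Finset

variable {X : Type*}

/-- A history is valid if every choice set in it is nonempty. -/
def ValidHist (h : List (Finset X)) : Prop := ∀ A ∈ h, A.Nonempty

/-- The set of alternatives chosen at some point along history `h`,
where the choice at stage `i` is made from `h.get i` given the prior history `h.take i`. -/
def chosenSet (ct : List (Finset X) → Finset X → X) (h : List (Finset X)) : Set X :=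
  {x | ∃ i : Fin h.length, ct (h.take i.1) (h.get i) = x}

/-- Effective consideration set after history `h` facing choice set `A`. -/
def consider (ct : List (Finset X) → Finset X → X) (Γ : Finset X → Set X)
    (h : List (Finset X)) (A : Finset X) : Set X :=
  Γ A ∪ (chosenSet ct h ∩ ↑A)

/-- `(u, Γ)` is an AAT representation of the choice process `ct`:
`Γ A` is a nonempty subset of `A`, and the choice after any valid history `h` from any
nonempty `A` is the unique `u`-maximizer of `Γ A ∪ (chosenSet h ∩ A)`. -/
def IsAAT (ct : List (Finset X) → Finset X → X) (u : X → ℝ) (Γ : Finset X → Set X) : Prop :=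
  (∀ A : Finset X, A.Nonempty → (Γ A).Nonempty ∧ Γ A ⊆ ↑A) ∧
  ∀ h : List (Finset X), ValidHist h → ∀ A : Finset X, A.Nonempty →
    ct h A ∈ consider ct Γ h A ∧
      ∀ z ∈ consider ct Γ h A, z ≠ ct h A → u z < u (ct h A)

/-- The set of ever-chosen alternatives. -/
def everChosen (ct : List (Finset X) → Finset X → X) : Set X :=
  {x | ∃ (h : List (Finset X)) (A : Finset X), ValidHist h ∧ A.Nonempty ∧ ct h A = x}

/-- The history consisting of the first `n` choice sets of an infinite sequence. -/
def prefHist (seq : ℕ → Finset X) (n : ℕ) : List (Finset X) := (List.range n).map seq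

/-- The choice made at stage `n` of the infinite sequence `seq`. -/
def choiceAt (ct : List (Finset X) → Finset X → X) (seq : ℕ → Finset X) (n : ℕ) : X :=
  ct (prefHist seq n) (seq n)

/-- The switch relation `x 𝕊 y`: in some sequence of nonempty choice sets, `y` is chosen at
some stage and `x` is chosen at a strictly later stage from a set containing `y`. -/
def Switch (ct : List (Finset X) → Finset X → X) (x y : X) : Prop :=
  x ≠ y ∧ ∃ seq : ℕ → Finset X, (∀ n, (seq n).Nonempty) ∧
    ∃ i j : ℕ, i < j ∧ choiceAt ct seq i = y ∧ y ∈ seq j ∧ choiceAt ct seq j = x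


lemma chosen_append (ct : List (Finset X) → Finset X → X) (h : List (Finset X)) (A : Finset X) :
    chosenSet ct (h ++ [A]) = chosenSet ct h ∪ {ct h A} := by
  ext z
  simp only [chosenSet, Set.mem_setOf_eq, Set.mem_union, Set.mem_singleton_iff]
  constructor
  · rintro ⟨i, rfl⟩
    have hi2 : i.1 < h.length + 1 := by simpa using i.2
    rcases lt_or_eq_of_le (Nat.lt_succ_iff.mp hi2) with hi | hi
    · left
      refine ⟨⟨i.1, hi⟩, ?_⟩
      simp only [List.get_eq_getElem]
      rw [List.take_append_of_le_length hi.le, List.getElem_append_left hi]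
    · right
      simp only [List.get_eq_getElem]
      rw [List.getElem_concat_length (l := h) (a := A) (i := i.1) hi, hi,
        List.take_append_of_le_length le_rfl, List.take_length]
  · rintro (⟨i, rfl⟩ | hz)
    · have hi : i.1 < (h ++ [A]).length := by
        simp
      refine ⟨⟨i.1, hi⟩, ?_⟩
      simp only [List.get_eq_getElem]
      rw [List.take_append_of_le_length i.2.le, List.getElem_append_left i.2]
    · have hi : h.length < (h ++ [A]).length := by simp
      refine ⟨⟨h.length, hi⟩, ?_⟩
      simp only [List.get_eq_getElem]
      rw [List.getElem_concat_length (l := h) (a := A) (i := h.length) rfl,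
        List.take_append_of_le_length le_rfl, List.take_length, hz]

lemma valid_append {h : List (Finset X)} {A : Finset X} (hh : ValidHist h)
    (hA : A.Nonempty) : ValidHist (h ++ [A]) := by
  intro S hS
  rcases List.mem_append.mp hS with h1 | h1
  · exact hh S h1
  · simp at h1; subst h1; exact hA

/-- Convergence: if after history `h` the DM would choose `x` from `A` and `y` from `B`,
with `x ≠ y` and both in `A ∩ B`, then the second-period choices from the alternating
orders coincide, converging on the preferred alternative. -/
theorem stmt2 (ct : List (Finset X) → Finset X → X) (u : X → ℝ) (Γ : Finset X → Set X)
    (hAAT : IsAAT ct u Γ) (h : List (Finset X)) (hh : ValidHist h)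
    (A B : Finset X) (hA : A.Nonempty) (hB : B.Nonempty) (x y : X)
    (hx : ct h A = x) (hy : ct h B = y) (hxy : x ≠ y)
    (hxA : x ∈ A) (hxB : x ∈ B) (hyA : y ∈ A) (hyB : y ∈ B) :
    (ct (h ++ [A]) B = x ∧ ct (h ++ [B]) A = x ∧ u x > u y) ∨
    (ct (h ++ [A]) B = y ∧ ct (h ++ [B]) A = y ∧ u y > u x) := by
  -- maximality after h
  obtain ⟨hxin, hxmax⟩ := hAAT.2 h hh A hA
  obtain ⟨hyin, hymax⟩ := hAAT.2 h hh B hB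
  rw [hx] at hxin hxmax
  rw [hy] at hyin hymax
  have hvA := valid_append hh hA
  have hvB := valid_append hh hB
  obtain ⟨hzin, hzmax⟩ := hAAT.2 (h ++ [A]) hvA B hB
  obtain ⟨hwin, hwmax⟩ := hAAT.2 (h ++ [B]) hvB A hA
  set z := ct (h ++ [A]) B with hzdef
  set w := ct (h ++ [B]) A with hwdef
  -- splitting the new consideration sets
  have hsplitA : ∀ t, t ∈ consider ct Γ (h ++ [A]) B ↔ t ∈ consider ct Γ h B ∨ t = x := by
    intro t
    simp only [consider, chosen_append, hx, Set.mem_union, Set.mem_inter_iff,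
      Set.mem_singleton_iff, Finset.coe_inter, Finset.mem_coe]
    constructor
    · rintro (h1 | ⟨(h1 | h1), h2⟩)
      · exact Or.inl (Or.inl h1)
      · exact Or.inl (Or.inr ⟨h1, h2⟩)
      · exact Or.inr h1
    · rintro ((h1 | ⟨h1, h2⟩) | h1)
      · exact Or.inl h1
      · exact Or.inr ⟨Or.inl h1, h2⟩
      · exact Or.inr ⟨Or.inr h1, by rw [h1]; exact hxB⟩
  have hsplitB : ∀ t, t ∈ consider ct Γ (h ++ [B]) A ↔ t ∈ consider ct Γ h A ∨ t = y := by
    intro t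
    simp only [consider, chosen_append, hy, Set.mem_union, Set.mem_inter_iff,
      Set.mem_singleton_iff, Finset.coe_inter, Finset.mem_coe]
    constructor
    · rintro (h1 | ⟨(h1 | h1), h2⟩)
      · exact Or.inl (Or.inl h1)
      · exact Or.inl (Or.inr ⟨h1, h2⟩)
      · exact Or.inr h1
    · rintro ((h1 | ⟨h1, h2⟩) | h1)
      · exact Or.inl h1
      · exact Or.inr ⟨Or.inl h1, h2⟩
      · exact Or.inr ⟨Or.inr h1, by rw [h1]; exact hyA⟩
  have hyinA : y ∈ consider ct Γ (h ++ [A]) B := (hsplitA y).mpr (Or.inl hyin)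
  have hxinA : x ∈ consider ct Γ (h ++ [A]) B := (hsplitA x).mpr (Or.inr rfl)
  have hxinB : x ∈ consider ct Γ (h ++ [B]) A := (hsplitB x).mpr (Or.inl hxin)
  have hyinB : y ∈ consider ct Γ (h ++ [B]) A := (hsplitB y).mpr (Or.inr rfl)
  -- z ∈ {x, y}
  have hzxy : z = x ∨ z = y := by
    by_contra hc
    push_neg at hc
    obtain ⟨hc1, hc2⟩ := hc
    rcases (hsplitA z).mp hzin with h1 | h1
    · have := hymax z h1 hc2
      have := hzmax y hyinA (Ne.symm hc2)
      linarith
    · exact hc1 h1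
  have hwxy : w = x ∨ w = y := by
    by_contra hc
    push_neg at hc
    obtain ⟨hc1, hc2⟩ := hc
    rcases (hsplitB w).mp hwin with h1 | h1
    · have := hxmax w h1 hc1
      have := hwmax x hxinB (Ne.symm hc1)
      linarith
    · exact hc2 h1
  rcases hzxy with hz1 | hz1
  · have hxy' : u y < u x := by
      have := hzmax y hyinA (by rw [hz1]; exact Ne.symm hxy)
      rwa [hz1] at this
    have hw1 : w = x := by
      rcases hwxy with h1 | h1
      · exact h1
      · exfalso
        have := hwmax x hxinB (by rw [h1]; exact hxy)
        rw [h1] at this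
        linarith
    exact Or.inl ⟨hz1, hw1, hxy'⟩
  · have hxy' : u x < u y := by
      have := hzmax x hxinA (by rw [hz1]; exact hxy)
      rwa [hz1] at this
    have hw1 : w = y := by
      rcases hwxy with h1 | h1
      · exfalso
        have := hwmax y hyinB (by rw [h1]; exact Ne.symm hxy)
        rw [h1] at this
        linarith
      · exact h1
    exact Or.inr ⟨hz1, hw1, hxy'⟩
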